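/- If x does not occur in M and M ≠ x, then the substitution [M/x] unifies x with M and is a most general unifier of x and M. -/

import Mathlib

/-- First-order terms: variables or constructor applications. -/
inductive Tm where
  | var : ℕ → Tm
  | app : ℕ → List Tm → Tm

/-- The occurs relation `x ∈ M`. -/
inductive Occurs : ℕ → Tm → Prop where
  | var : ∀ {x}, Occurs x (.var x)
  | app : ∀ {x c Ms M}, M ∈ Ms → Occurs x M → Occurs x (.app c Ms)

/-- The non-occurs relation `x ∉ M`. -/
inductive NotOccurs : ℕ → Tm → Prop where
  | var : ∀ {x y}, x ≠ y → NotOccurs x (.var y)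
  | app : ∀ {x c Ms}, (∀ M ∈ Ms, NotOccurs x M) → NotOccurs x (.app c Ms)

/-- Strict substructure relation `M ⊏ M'`. -/
inductive Substr : Tm → Tm → Prop where
  | base : ∀ {M c Ms}, M ∈ Ms → Substr M (.app c Ms)
  | ind : ∀ {M Mi c Ms}, Mi ∈ Ms → Substr M Mi → Substr M (.app c Ms)

/-- Homomorphic extension of a substitution `σ : ℕ → Tm` to terms. -/
def applySub (σ : ℕ → Tm) : Tm → Tm
  | .var y => σ y
  | .app c Ms => .app c (Ms.attach.map (fun ⟨m, _⟩ => applySub σ m))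
  decreasing_by have := List.sizeOf_lt_of_mem ‹_›; simp_all; omega

/-- The single substitution `[M/x]`. -/
def single (M : Tm) (x : ℕ) : ℕ → Tm := fun y => if y = x then M else .var y

/-- Capture-free substitution `[M/x]M'`. -/
def subst (M : Tm) (x : ℕ) (M' : Tm) : Tm := applySub (single M x) M'

/-- If x does not occur in M and M ≠ x, then [M/x] unifies x with M
and is a most general unifier of x and M. -/

lemma applySub_not_occurs (σ : ℕ → Tm) {x : ℕ} (hσ : ∀ y, y ≠ x → σ y = .var y) :
    ∀ M : Tm, ¬ Occurs x M → applySub σ M = M := by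
  intro M
  induction M using applySub.induct with
  | case1 y =>
      intro h
      rw [applySub]
      exact hσ y (fun e => h (e ▸ Occurs.var))
  | case2 c Ms ih =>
      intro h
      rw [applySub]
      congr 1
      conv_rhs => rw [← List.map_id Ms, ← List.attach_map_val (l := Ms) (f := id)]
      apply List.map_congr_left
      rintro ⟨m, hm⟩ -
      exact ih m hm (fun ho => h (Occurs.app hm ho))

theorem single_is_mgu {x : ℕ} {M : Tm} (h : ¬ Occurs x M) (hne : M ≠ .var x) :
    applySub (single M x) (.var x) = applySub (single M x) M ∧
    ∀ σ' : ℕ → Tm, applySub σ' (.var x) = applySub σ' M →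
      ∃ σs : ℕ → Tm, ∀ y, σ' y = applySub σs (single M x y) := by
  have key : applySub (single M x) M = M :=
    applySub_not_occurs _ (fun y hy => by simp [single, hy]) M h
  constructor
  · rw [applySub, key]; simp [single]
  · intro σ' hσ'
    refine ⟨σ', fun y => ?_⟩
    by_cases hy : y = x
    · subst hy; simp [single]
      rw [← hσ', applySub]
    · simp [single, hy, applySub]
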